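/- Let S be a nonnegative random variable with E[S] = 1/μ, and suppose its Laplace transform S̃(s) = E[e^{−sS}] is finite on an interval (−s*, ∞) with s* > 0 and S̃(s) → ∞ as s ↓ −s*. Let 0 < λ < μ. Then there exists a unique θ* ∈ (0, s*) such that S̃(−θ*) = (λ + θ*)/λ, i.e., λ·S̃(−θ*) − λ − θ* = 0. -/

import Mathlib

open MeasureTheory

lemma exp_le_one_add_mul_exp (x : ℝ) : Real.exp x ≤ 1 + x * Real.exp x := by
  have hm : Real.exp (-x) * Real.exp x = 1 := by rw [← Real.exp_add]; simp
  nlinarith [Real.add_one_le_exp (-x), Real.exp_pos x, Real.exp_pos (-x)]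

lemma convex_unique_root {g : ℝ → ℝ} {c : ℝ} (hg : ConvexOn ℝ (Set.Iio c) g)
    (hc : (0:ℝ) < c) (hg0 : g 0 = 0) {t : ℝ} (ht : t ∈ Set.Ioo 0 c) (hgt : g t < 0) :
    ∀ r₁ ∈ Set.Ioo (0:ℝ) c, ∀ r₂ ∈ Set.Ioo (0:ℝ) c, g r₁ = 0 → g r₂ = 0 → r₁ = r₂ := by
  obtain ⟨ht0, htc⟩ := ht
  have key : ∀ a b d : ℝ, a < b → b < d → d < c →
      g b ≤ ((d-b)/(d-a)) * g a + ((b-a)/(d-a)) * g d := by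
    intro a b d hab hbd hdc
    have had : (0:ℝ) < d - a := by linarith
    have h1 : (0:ℝ) ≤ (d-b)/(d-a) := div_nonneg (by linarith) had.le
    have h2 : (0:ℝ) ≤ (b-a)/(d-a) := div_nonneg (by linarith) had.le
    have h3 : (d-b)/(d-a) + (b-a)/(d-a) = 1 := by field_simp; ring
    have h4 := hg.2 (show a ∈ Set.Iio c by simp only [Set.mem_Iio]; linarith)
      (show d ∈ Set.Iio c from hdc) h1 h2 h3
    have heq : ((d-b)/(d-a)) • a + ((b-a)/(d-a)) • d = b := by
      simp only [smul_eq_mul]; field_simp; ring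
    rw [heq] at h4
    simpa only [smul_eq_mul] using h4
  have main : ∀ r₁ r₂ : ℝ, r₁ ∈ Set.Ioo (0:ℝ) c → r₂ ∈ Set.Ioo (0:ℝ) c →
      g r₁ = 0 → g r₂ = 0 → r₁ < r₂ → False := by
    intro r₁ r₂ hr₁ hr₂ hg1 hg2 hlt
    obtain ⟨hr₁0, hr₁c⟩ := hr₁
    obtain ⟨hr₂0, hr₂c⟩ := hr₂
    rcases lt_trichotomy t r₁ with h | h | h
    · have := key t r₁ r₂ h hlt hr₂c
      have hc1 : (0:ℝ) < (r₂ - r₁)/(r₂ - t) := div_pos (by linarith) (by linarith)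
      rw [hg1, hg2] at this
      nlinarith
    · rw [← h] at hg1; exact absurd hg1 hgt.ne
    · rcases lt_trichotomy t r₂ with h2 | h2 | h2
      · have := key 0 r₁ t hr₁0 h htc
        have hc2 : (0:ℝ) < (r₁ - 0)/(t - 0) := div_pos (by linarith) (by linarith)
        rw [hg0, hg1] at this
        nlinarith
      · rw [← h2] at hg2; exact absurd hg2 hgt.ne
      · have := key 0 r₂ t hr₂0 h2 htc
        have hc2 : (0:ℝ) < (r₂ - 0)/(t - 0) := div_pos (by linarith) (by linarith)
        rw [hg0, hg2] at this
        nlinarith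
  intro r₁ hr₁ r₂ hr₂ hg1 hg2
  rcases lt_trichotomy r₁ r₂ with h | h | h
  · exact absurd (main r₁ r₂ hr₁ hr₂ hg1 hg2 h) (by simp)
  · exact h
  · exact absurd (main r₂ r₁ hr₂ hr₁ hg2 hg1 h) (by simp)

/-- Existence and uniqueness of the asymptotic decay rate `θ*`:
if `S ≥ 0` has `E[S] = 1/μ`, its Laplace transform `L(s) = E[e^{−sS}]` is finite on
`(−s*, ∞)` and blows up as `s ↓ −s*`, and `0 < λ < μ`, then there is a unique
`θ* ∈ (0, s*)` with `L(−θ*) = (λ + θ*)/λ`. -/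
theorem exists_unique_decay_rate {Ω : Type*} [MeasurableSpace Ω] (P : Measure Ω)
    [IsProbabilityMeasure P] (S : Ω → ℝ) (hS : Measurable S) (hSpos : ∀ᵐ ω ∂P, 0 ≤ S ω)
    (μ lam sstar : ℝ) (hμ : 0 < μ) (hlam : 0 < lam) (hlamμ : lam < μ) (hsstar : 0 < sstar)
    (hmean : ∫ ω, S ω ∂P = 1 / μ)
    (hfin : ∀ s : ℝ, -sstar < s → Integrable (fun ω => Real.exp (-(s * S ω))) P)
    (hblow : Filter.Tendsto (fun s : ℝ => ∫ ω, Real.exp (-(s * S ω)) ∂P)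
      (nhdsWithin (-sstar) (Set.Ioi (-sstar))) Filter.atTop) :
    ∃! θ : ℝ, θ ∈ Set.Ioo 0 sstar ∧
      (∫ ω, Real.exp (-(-θ * S ω)) ∂P) = (lam + θ) / lam := by
  classical
  set F : ℝ → ℝ := fun θ => ∫ ω, Real.exp (θ * S ω) ∂P with hFdef
  have hform : ∀ θ : ℝ, (∫ ω, Real.exp (-(-θ * S ω)) ∂P) = F θ := by
    intro θ; simp only [hFdef, neg_mul, neg_neg]
  have hval : ∀ θ : ℝ, (lam + θ) / lam = 1 + θ / lam := by
    intro θ; field_simp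
  -- integrability
  have hInt : ∀ θ : ℝ, θ < sstar → Integrable (fun ω => Real.exp (θ * S ω)) P := by
    intro θ hθ
    have := hfin (-θ) (by linarith)
    simpa using this
  have hF0 : F 0 = 1 := by simp [hFdef]
  -- convexity of F on Iio sstar
  have hconv : ConvexOn ℝ (Set.Iio sstar) F := by
    refine ⟨convex_Iio _, ?_⟩
    intro x hx y hy a b ha hb hab
    have hxy : a * x + b * y < sstar := by
      have := (convex_Iio sstar) hx hy ha hb hab
      simpa using this
    have h1 : ∀ ω, Real.exp ((a • x + b • y) * S ω)
        ≤ a * Real.exp (x * S ω) + b * Real.exp (y * S ω) := by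
      intro ω
      have := convexOn_exp.2 (Set.mem_univ (x * S ω)) (Set.mem_univ (y * S ω)) ha hb hab
      simpa [smul_eq_mul, add_mul, mul_assoc] using this
    calc F (a • x + b • y) = ∫ ω, Real.exp ((a • x + b • y) * S ω) ∂P := rfl
      _ ≤ ∫ ω, (a * Real.exp (x * S ω) + b * Real.exp (y * S ω)) ∂P := by
          refine integral_mono (hInt _ (by simpa using hxy)) ?_ h1
          exact ((hInt x hx).const_mul a).add ((hInt y hy).const_mul b)
      _ = a • F x + b • F y := by
          rw [integral_add ((hInt x hx).const_mul a) ((hInt y hy).const_mul b),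
            integral_const_mul, integral_const_mul]
          simp [hFdef, smul_eq_mul]
  have hcont : ContinuousOn F (Set.Iio sstar) := hconv.continuousOn isOpen_Iio
  -- integrability of S * exp(θ S) for 0 ≤ θ ≤ sstar/4
  have hIntS : ∀ θ : ℝ, 0 ≤ θ → θ ≤ sstar / 4 →
      Integrable (fun ω => S ω * Real.exp (θ * S ω)) P := by
    intro θ hθ0 hθ4
    refine Integrable.mono' ((hInt (sstar/2) (by linarith)).const_mul (4/sstar))
      ((hS.aestronglyMeasurable).mul ((hS.const_mul θ).exp.aestronglyMeasurable)) ?_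
    filter_upwards [hSpos] with ω hω
    have hx : S ω ≤ (4/sstar) * Real.exp (sstar/4 * S ω) := by
      have h1 : sstar/4 * S ω ≤ Real.exp (sstar/4 * S ω) := by
        nlinarith [Real.add_one_le_exp (sstar/4 * S ω)]
      have h2 : (4/sstar) * (sstar/4 * S ω) ≤ (4/sstar) * Real.exp (sstar/4 * S ω) :=
        mul_le_mul_of_nonneg_left h1 (by positivity)
      calc S ω = (4/sstar) * (sstar/4 * S ω) := by field_simp
        _ ≤ _ := h2
    have hexp : Real.exp (θ * S ω) ≤ Real.exp (sstar/4 * S ω) :=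
      Real.exp_le_exp.2 (mul_le_mul_of_nonneg_right hθ4 hω)
    have habs : |S ω * Real.exp (θ * S ω)| = S ω * Real.exp (θ * S ω) :=
      abs_of_nonneg (mul_nonneg hω (Real.exp_pos _).le)
    rw [Real.norm_eq_abs, habs]
    calc S ω * Real.exp (θ * S ω)
        ≤ ((4/sstar) * Real.exp (sstar/4 * S ω)) * Real.exp (sstar/4 * S ω) :=
          mul_le_mul hx hexp (Real.exp_pos _).le (by positivity)
      _ = (4/sstar) * Real.exp (sstar/2 * S ω) := by
          rw [mul_assoc, ← Real.exp_add]; ring_nf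
  -- find θ₀ ∈ (0, sstar) with F θ₀ < 1 + θ₀/lam
  obtain ⟨θ₀, hθ₀mem, hθ₀neg⟩ :
      ∃ θ₀ ∈ Set.Ioo (0:ℝ) sstar, F θ₀ < 1 + θ₀ / lam := by
    set q : ℕ → ℝ := fun n => (sstar/4) * (1/2)^n with hq
    have hq0 : ∀ n, 0 < q n := fun n => by positivity
    have hq4 : ∀ n, q n ≤ sstar/4 := by
      intro n
      have h : (1/2:ℝ)^n ≤ 1 := pow_le_one₀ (by norm_num) (by norm_num)
      calc q n = (sstar/4) * (1/2)^n := rfl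
        _ ≤ (sstar/4) * 1 := by nlinarith
        _ = sstar/4 := by ring
    have hqlim : Filter.Tendsto q Filter.atTop (nhds 0) := by
      have h := tendsto_pow_atTop_nhds_zero_of_lt_one
        (by norm_num : (0:ℝ) ≤ 1/2) (by norm_num)
      have h2 := h.const_mul (sstar/4)
      rw [mul_zero] at h2
      exact h2
    have hDCT : Filter.Tendsto (fun n => ∫ ω, S ω * Real.exp (q n * S ω) ∂P)
        Filter.atTop (nhds (∫ ω, S ω ∂P)) := by
      refine tendsto_integral_of_dominated_convergence
        (fun ω => S ω * Real.exp (sstar/4 * S ω))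
        (fun n => ((hS.aestronglyMeasurable).mul
          ((hS.const_mul (q n)).exp.aestronglyMeasurable)))
        (hIntS (sstar/4) (by positivity) le_rfl) ?_ ?_
      · intro n
        filter_upwards [hSpos] with ω hω
        rw [Real.norm_eq_abs, abs_of_nonneg (mul_nonneg hω (Real.exp_pos _).le)]
        exact mul_le_mul_of_nonneg_left
          (Real.exp_le_exp.2 (mul_le_mul_of_nonneg_right (hq4 n) hω)) hω
      · filter_upwards with ω
        have h1 : Filter.Tendsto (fun n => q n * S ω) Filter.atTop (nhds 0) := by
          have h := hqlim.mul_const (S ω)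
          rwa [zero_mul] at h
        have h2 : Filter.Tendsto (fun n => Real.exp (q n * S ω))
            Filter.atTop (nhds 1) := by
          have := (Real.continuous_exp.tendsto 0).comp h1
          simpa [Function.comp_def] using this
        have h3 := (tendsto_const_nhds (x := S ω) (f := Filter.atTop (α := ℕ))).mul h2
        simpa using h3
    have hlt : ∫ ω, S ω ∂P < 1 / lam := by
      rw [hmean]
      exact one_div_lt_one_div_of_lt hlam hlamμ
    obtain ⟨n, hn⟩ := (hDCT.eventually_lt_const hlt).exists
    refine ⟨q n, ⟨hq0 n, lt_of_le_of_lt (hq4 n) (by linarith)⟩, ?_⟩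
    have hqint := (hIntS (q n) (hq0 n).le (hq4 n))
    have hstep : F (q n) ≤ 1 + q n * ∫ ω, S ω * Real.exp (q n * S ω) ∂P := by
      have hint2 : Integrable (fun ω => 1 + q n * (S ω * Real.exp (q n * S ω))) P :=
        (integrable_const 1).add (hqint.const_mul _)
      have hmono : F (q n) ≤ ∫ ω, (1 + q n * (S ω * Real.exp (q n * S ω))) ∂P := by
        refine integral_mono_ae (hInt _ (lt_of_le_of_lt (hq4 n) (by linarith))) hint2 ?_
        filter_upwards [hSpos] with ω hω
        have h := exp_le_one_add_mul_exp (q n * S ω)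
        calc Real.exp (q n * S ω) ≤ 1 + (q n * S ω) * Real.exp (q n * S ω) := h
          _ = 1 + q n * (S ω * Real.exp (q n * S ω)) := by ring
      calc F (q n) ≤ _ := hmono
        _ = 1 + q n * ∫ ω, S ω * Real.exp (q n * S ω) ∂P := by
          rw [integral_add (integrable_const 1) (hqint.const_mul _),
            integral_const, integral_const_mul]
          simp
    have hlt2 : q n * (∫ ω, S ω * Real.exp (q n * S ω) ∂P) < q n * (1/lam) :=
      mul_lt_mul_of_pos_left hn (hq0 n)
    have : q n * (1/lam) = q n / lam := by ring
    linarith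
  obtain ⟨hθ₀pos, hθ₀lt⟩ := hθ₀mem
  -- F blows up at sstar⁻
  have hFtop : Filter.Tendsto F (nhdsWithin sstar (Set.Iio sstar)) Filter.atTop := by
    have hneg : Filter.Tendsto (fun θ : ℝ => -θ) (nhdsWithin sstar (Set.Iio sstar))
        (nhdsWithin (-sstar) (Set.Ioi (-sstar))) :=
      (continuous_neg.continuousWithinAt).tendsto_nhdsWithin
        (fun x hx => by simpa using hx)
    have h2 := hblow.comp hneg
    refine h2.congr ?_
    intro θ
    simp only [Function.comp, hFdef, neg_mul, neg_neg]
  -- find b ∈ (θ₀, sstar) with F b > 1 + b/lam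
  obtain ⟨b, hbF, hbmem⟩ : ∃ b, (1 + sstar/lam < F b) ∧ b ∈ Set.Ioo θ₀ sstar := by
    have hmem : Set.Ioo θ₀ sstar ∈ nhdsWithin sstar (Set.Iio sstar) :=
      Ioo_mem_nhdsLT_of_mem ⟨hθ₀lt, le_refl _⟩
    have hev1 := hFtop.eventually (Filter.eventually_gt_atTop (1 + sstar/lam))
    have hev2 : ∀ᶠ x in nhdsWithin sstar (Set.Iio sstar), x ∈ Set.Ioo θ₀ sstar :=
      Filter.eventually_of_mem hmem (fun x hx => hx)
    exact (hev1.and hev2).exists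
  have hbneg : 1 + b / lam < F b := by
    have : b / lam < sstar / lam := (div_lt_div_iff_of_pos_right hlam).2 hbmem.2
    linarith
  -- IVT for g = F - (1 + θ/lam)
  set g : ℝ → ℝ := fun θ => F θ - (1 + θ / lam) with hgdef
  have hgcont : ContinuousOn g (Set.Icc θ₀ b) := by
    apply ContinuousOn.sub
    · exact hcont.mono (fun x hx => lt_of_le_of_lt hx.2 hbmem.2)
    · exact (continuous_const.add (continuous_id.div_const lam)).continuousOn
  have h0mem : (0:ℝ) ∈ Set.Ioo (g θ₀) (g b) := by
    constructor
    · simp only [hgdef]; linarith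
    · simp only [hgdef]; linarith
  obtain ⟨θ, hθIoo, hθroot⟩ := intermediate_value_Ioo hbmem.1.le hgcont h0mem
  have hθmem : θ ∈ Set.Ioo (0:ℝ) sstar := ⟨lt_trans hθ₀pos hθIoo.1, lt_trans hθIoo.2 hbmem.2⟩
  have hgconv : ConvexOn ℝ (Set.Iio sstar) g := by
    apply hconv.sub
    refine ⟨convex_Iio _, ?_⟩
    intro x _ y _ a c ha hc hac
    apply le_of_eq
    simp only [smul_eq_mul]
    linear_combination hac
  have hg0 : g 0 = 0 := by simp [hgdef, hF0]
  have hgθ₀ : g θ₀ < 0 := by simp only [hgdef]; linarith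
  have hroot_iff : ∀ y : ℝ, ((∫ ω, Real.exp (-(-y * S ω)) ∂P) = (lam + y) / lam) ↔ g y = 0 := by
    intro y
    rw [hform, hval]
    simp only [hgdef]
    constructor <;> intro h <;> linarith
  refine ⟨θ, ⟨hθmem, (hroot_iff θ).2 hθroot⟩, ?_⟩
  intro y ⟨hymem, hyeq⟩
  exact convex_unique_root hgconv hsstar hg0 ⟨hθ₀pos, hθ₀lt⟩ hgθ₀
    y hymem θ hθmem ((hroot_iff y).1 hyeq) hθroot
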